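/- Fix c ∈ (1,2), γ = 1/c, and let ψ(t) = t - ⌊t⌋ - 1/2. For any sequence of complex numbers (z_k) with |z_k| ≤ 1 and any K ≥ 1: Σ_{k ≤ K, k = ⌊n^c⌋ for some n ∈ ℕ} z_k = γ Σ_{k ≤ K} z_k k^{γ-1} + Σ_{k ≤ K} z_k (ψ(-(k+1)^γ) - ψ(-k^γ)) + O(1), where the implied constant depends only on c. -/

import Mathlib

open scoped Classical

/-- The sawtooth function ψ(t) = t - ⌊t⌋ - 1/2. -/
noncomputable def psi (t : ℝ) : ℝ := t - (⌊t⌋ : ℝ) - 1 / 2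

private lemma tangent_up {γ x : ℝ} (h0 : 0 < γ) (h1 : γ ≤ 1) (hx : 1 ≤ x) :
    (x + 1) ^ γ ≤ x ^ γ + γ * x ^ (γ - 1) := by
  have hx0 : (0:ℝ) < x := lt_of_lt_of_le one_pos hx
  have h : x + 1 = x * (1 + 1/x) := by field_simp
  rw [h, Real.mul_rpow hx0.le (by positivity)]
  have hb : (1 + 1/x) ^ γ ≤ 1 + γ * (1/x) :=
    rpow_one_add_le_one_add_mul_self (le_trans (by norm_num : (-1:ℝ) ≤ 0) (by positivity)) h0.le h1
  calc x ^ γ * (1 + 1/x) ^ γ ≤ x ^ γ * (1 + γ * (1/x)) :=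
        mul_le_mul_of_nonneg_left hb (Real.rpow_nonneg hx0.le γ)
    _ = x ^ γ + γ * x ^ (γ - 1) := by
        rw [Real.rpow_sub hx0, Real.rpow_one]; field_simp

private lemma tangent_down {γ x : ℝ} (h0 : 0 < γ) (h1 : γ ≤ 1) (hx : 1 ≤ x) :
    γ * x ^ (γ - 1) ≤ x ^ γ - (x - 1) ^ γ := by
  have hx0 : (0:ℝ) < x := lt_of_lt_of_le one_pos hx
  have hinv : 1/x ≤ 1 := by rw [div_le_one hx0]; exact hx
  have h : x - 1 = x * (1 + (-(1/x))) := by field_simp; ring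
  rw [h, Real.mul_rpow hx0.le (by linarith)]
  have hb : (1 + (-(1/x))) ^ γ ≤ 1 + γ * (-(1/x)) :=
    rpow_one_add_le_one_add_mul_self (by linarith) h0.le h1
  have hm := mul_le_mul_of_nonneg_left hb (Real.rpow_nonneg hx0.le γ)
  have he : x ^ γ * (1 + γ * (-(1/x))) = x ^ γ - γ * x ^ (γ - 1) := by
    rw [Real.rpow_sub hx0, Real.rpow_one]; field_simp; ring
  linarith [he ▸ hm]

private lemma indicator_eq {c γ : ℝ} (hc1 : 1 < c) (hγ : γ = 1/c) (k : ℕ) (hk : 1 ≤ k) :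
    (if (∃ n : ℕ, 0 < n ∧ (k : ℤ) = ⌊(n : ℝ) ^ c⌋) then (1:ℝ) else 0) =
      ((⌊-((k:ℝ) ^ γ)⌋ - ⌊-(((k:ℝ) + 1) ^ γ)⌋ : ℤ) : ℝ) := by
  have hc0 : (0:ℝ) < c := by linarith
  have hγ0 : 0 < γ := by rw [hγ]; positivity
  have hγ1 : γ ≤ 1 := by rw [hγ]; rw [div_le_one hc0]; linarith
  have hγc : γ * c = 1 := by rw [hγ]; field_simp
  have hk1 : (1:ℝ) ≤ (k:ℝ) := by exact_mod_cast hk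
  set a : ℝ := (k:ℝ) ^ γ with ha_def
  set b : ℝ := ((k:ℝ) + 1) ^ γ with hb_def
  have ha1 : 1 ≤ a := by
    have := Real.rpow_le_rpow (by norm_num) hk1 hγ0.le
    simpa using this
  have hab : a ≤ b := Real.rpow_le_rpow (by positivity) (by linarith) hγ0.le
  have hba1 : b ≤ a + 1 := by
    have h1 := tangent_up hγ0 hγ1 hk1
    have h2 : (k:ℝ) ^ (γ - 1) ≤ 1 :=
      Real.rpow_le_one_of_one_le_of_nonpos hk1 (by linarith)
    have h3 : γ * (k:ℝ) ^ (γ - 1) ≤ 1 := by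
      calc γ * (k:ℝ) ^ (γ - 1) ≤ 1 * 1 :=
            mul_le_mul hγ1 h2 (by positivity) (by norm_num)
        _ = 1 := by norm_num
    calc b ≤ a + γ * (k:ℝ) ^ (γ - 1) := h1
      _ ≤ a + 1 := by linarith
  have hd_le : ⌊-a⌋ - ⌊-b⌋ ≤ 1 := by
    have : ⌊-a⌋ ≤ ⌊-b + 1⌋ := Int.floor_le_floor (by linarith)
    rw [Int.floor_add_one] at this
    omega
  have hd_ge : 0 ≤ ⌊-a⌋ - ⌊-b⌋ := by
    have : ⌊-b⌋ ≤ ⌊-a⌋ := Int.floor_le_floor (by linarith)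
    omega
  have key : (∃ n : ℕ, 0 < n ∧ (k : ℤ) = ⌊(n : ℝ) ^ c⌋) ↔ ⌊-a⌋ - ⌊-b⌋ = 1 := by
    constructor
    · rintro ⟨n, hn, hkn⟩
      set x : ℝ := (n:ℝ) ^ c with hx_def
      have hx0 : 0 ≤ x := Real.rpow_nonneg (by positivity) c
      have h1 : (k:ℝ) ≤ x := by
        have := Int.floor_le x
        rw [← hkn] at this; exact_mod_cast this
      have h2 : x < (k:ℝ) + 1 := by
        have := Int.lt_floor_add_one x
        rw [← hkn] at this; exact_mod_cast this
      have hxγ : x ^ γ = (n:ℝ) := by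
        rw [hx_def, ← Real.rpow_mul (by positivity), mul_comm, hγc, Real.rpow_one]
      have han : a ≤ (n:ℝ) := by
        rw [← hxγ]; exact Real.rpow_le_rpow (by positivity) h1 hγ0.le
      have hnb : (n:ℝ) < b := by
        rw [← hxγ]; exact Real.rpow_lt_rpow hx0 h2 hγ0
      have e1 : (-(n:ℤ)) ≤ ⌊-a⌋ := Int.le_floor.2 (by push_cast; linarith)
      have e2 : ⌊-b⌋ < (-(n:ℤ)) := Int.floor_lt.2 (by push_cast; linarith)
      omega
    · intro hd
      set m : ℤ := -⌊-a⌋ with hm_def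
      have hma : a ≤ (m:ℝ) := by
        have := Int.floor_le (-a)
        push_cast [hm_def]; push_cast at this; linarith
      have hmb : (m:ℝ) < b := by
        have := Int.lt_floor_add_one (-b)
        have hfb : ⌊-b⌋ = ⌊-a⌋ - 1 := by omega
        rw [hfb] at this
        push_cast [hm_def]; push_cast at this; linarith
      have hm1 : 1 ≤ m := by exact_mod_cast (le_trans ha1 hma : (1:ℝ) ≤ (m:ℝ))
      refine ⟨m.toNat, by omega, ?_⟩
      have hmn : ((m.toNat : ℕ) : ℝ) = (m:ℝ) := by
        exact_mod_cast congrArg (fun z : ℤ => (z : ℝ))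
          (Int.toNat_of_nonneg (show (0:ℤ) ≤ m by omega))
      have hm0 : (0:ℝ) ≤ (m:ℝ) := by exact_mod_cast (by omega : (0:ℤ) ≤ m)
      have h1 : (k:ℝ) ≤ (m:ℝ) ^ c := by
        calc (k:ℝ) = ((k:ℝ) ^ γ) ^ c := by
              rw [← Real.rpow_mul (by positivity), hγc, Real.rpow_one]
          _ ≤ (m:ℝ) ^ c := Real.rpow_le_rpow (Real.rpow_nonneg (by positivity) γ) hma hc0.le
      have h2 : (m:ℝ) ^ c < (k:ℝ) + 1 := by
        calc (m:ℝ) ^ c < (((k:ℝ) + 1) ^ γ) ^ c := Real.rpow_lt_rpow hm0 hmb hc0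
          _ = (k:ℝ) + 1 := by rw [← Real.rpow_mul (by positivity), hγc, Real.rpow_one]
      symm
      rw [Int.floor_eq_iff]
      constructor
      · rw [hmn]; push_cast; linarith
      · rw [hmn]; push_cast; linarith
  by_cases h : ∃ n : ℕ, 0 < n ∧ (k : ℤ) = ⌊(n : ℝ) ^ c⌋
  · rw [if_pos h, key.1 h]; norm_num
  · rw [if_neg h]
    have : ⌊-a⌋ - ⌊-b⌋ ≠ 1 := fun hd => h (key.2 hd)
    have hz : ⌊-a⌋ - ⌊-b⌋ = 0 := by omega
    rw [hz]; norm_num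

theorem stmt_5 (c γ : ℝ) (hc1 : 1 < c) (hc2 : c < 2) (hγ : γ = 1 / c) :
    ∃ C > 0, ∀ z : ℕ → ℂ, (∀ k, ‖z k‖ ≤ 1) → ∀ K : ℕ, 1 ≤ K →
      ‖(∑ k ∈ (Finset.Icc 1 K).filter
            (fun k : ℕ => ∃ n : ℕ, 0 < n ∧ (k : ℤ) = ⌊(n : ℝ) ^ c⌋), z k)
        - ((Complex.ofReal γ) * ∑ k ∈ Finset.Icc 1 K,
              z k * Complex.ofReal ((k : ℝ) ^ (γ - 1))
           + ∑ k ∈ Finset.Icc 1 K,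
              z k * Complex.ofReal
                (psi (-(((k : ℝ) + 1) ^ γ)) - psi (-((k : ℝ) ^ γ))))‖ ≤ C := by
  have hc0 : (0:ℝ) < c := by linarith
  have hγ0 : 0 < γ := by rw [hγ]; positivity
  have hγ1 : γ ≤ 1 := by rw [hγ]; rw [div_le_one hc0]; linarith
  refine ⟨1, one_pos, ?_⟩
  intro z hz K hK
  set p : ℕ → Prop := fun k : ℕ => ∃ n : ℕ, 0 < n ∧ (k : ℤ) = ⌊(n : ℝ) ^ c⌋ with hp_def
  set t : ℕ → ℝ := fun k => γ * (k:ℝ) ^ (γ - 1) - (((k:ℝ) + 1) ^ γ - (k:ℝ) ^ γ) with ht_def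
  set v : ℕ → ℝ := fun j => (j:ℝ) ^ γ - ((j:ℝ) - 1) ^ γ with hv_def
  have hmain : (∑ k ∈ (Finset.Icc 1 K).filter p, z k)
        - ((Complex.ofReal γ) * ∑ k ∈ Finset.Icc 1 K,
              z k * Complex.ofReal ((k : ℝ) ^ (γ - 1))
           + ∑ k ∈ Finset.Icc 1 K,
              z k * Complex.ofReal
                (psi (-(((k : ℝ) + 1) ^ γ)) - psi (-((k : ℝ) ^ γ))))
      = ∑ k ∈ Finset.Icc 1 K, z k * Complex.ofReal (-(t k)) := by
    rw [Finset.sum_filter, Finset.mul_sum, ← Finset.sum_add_distrib,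
      ← Finset.sum_sub_distrib]
    refine Finset.sum_congr rfl ?_
    intro k hk
    have hk1 : 1 ≤ k := (Finset.mem_Icc.1 hk).1
    have hind := indicator_eq hc1 hγ k hk1
    have hreal : (if p k then (1:ℝ) else 0)
        - (γ * ((k:ℝ) ^ (γ - 1))
          + (psi (-(((k : ℝ) + 1) ^ γ)) - psi (-((k : ℝ) ^ γ)))) = -(t k) := by
      by_cases hcond : p k
      · rw [if_pos hcond]
        have hcond' : ∃ n : ℕ, 0 < n ∧ (k : ℤ) = ⌊(n : ℝ) ^ c⌋ := hcond
        rw [if_pos hcond'] at hind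
        unfold psi
        simp only [ht_def]
        have hval : ((⌊-((k:ℝ)^γ)⌋:ℤ):ℝ) - ((⌊-(((k:ℝ)+1)^γ)⌋:ℤ):ℝ) = 1 := by
          push_cast at hind; linarith
        push_cast
        set A := ((k:ℝ)) ^ γ with hA
        set B := (((k:ℝ)) + 1) ^ γ with hB
        set G := ((k:ℝ)) ^ (γ - 1) with hG
        linear_combination -hval
      · rw [if_neg hcond]
        have hcond' : ¬ ∃ n : ℕ, 0 < n ∧ (k : ℤ) = ⌊(n : ℝ) ^ c⌋ := hcond
        rw [if_neg hcond'] at hind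
        unfold psi
        simp only [ht_def]
        have hval : ((⌊-((k:ℝ)^γ)⌋:ℤ):ℝ) - ((⌊-(((k:ℝ)+1)^γ)⌋:ℤ):ℝ) = 0 := by
          push_cast at hind; linarith
        push_cast
        set A := ((k:ℝ)) ^ γ with hA
        set B := (((k:ℝ)) + 1) ^ γ with hB
        set G := ((k:ℝ)) ^ (γ - 1) with hG
        linear_combination -hval
    have h2 : ((if p k then (1:ℝ) else 0 : ℝ) : ℂ)
        - ((γ:ℂ) * (((k:ℝ) ^ (γ - 1) : ℝ) : ℂ)
          + ((psi (-(((k : ℝ) + 1) ^ γ)) - psi (-((k : ℝ) ^ γ)) : ℝ) : ℂ))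
        = ((-(t k) : ℝ) : ℂ) := by exact_mod_cast congrArg Complex.ofReal hreal
    have h3 : (if p k then z k else 0)
        = z k * ((if p k then (1:ℝ) else 0 : ℝ) : ℂ) := by
      split_ifs <;> simp
    rw [h3]
    linear_combination z k * h2
  rw [hmain]
  have ht_nonneg : ∀ k : ℕ, 1 ≤ k → 0 ≤ t k := by
    intro k hk1
    have hk1' : (1:ℝ) ≤ (k:ℝ) := by exact_mod_cast hk1
    have := tangent_up hγ0 hγ1 hk1'
    simp only [ht_def]
    linarith
  have hsum : ∀ N : ℕ, (∑ k ∈ Finset.Icc 1 N, t k) + v (N + 1) ≤ 1 := by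
    intro N
    induction N with
    | zero =>
      have he : Finset.Icc 1 0 = (∅ : Finset ℕ) := by simp
      rw [he, Finset.sum_empty, zero_add]
      simp only [hv_def]
      push_cast
      norm_num
      positivity
    | succ N ih =>
      rw [Finset.sum_Icc_succ_top (by omega)]
      have hN0 : (0:ℝ) ≤ (N:ℝ) := Nat.cast_nonneg N
      have hd := tangent_down hγ0 hγ1 (x := (N:ℝ) + 1) (by linarith)
      have hstep : t (N + 1) + v (N + 1 + 1) ≤ v (N + 1) := by
        simp only [ht_def, hv_def]
        push_cast
        have e2 : ((N:ℝ) + 1) - 1 = (N:ℝ) := by ring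
        have e3 : ((N:ℝ) + 2) - 1 = (N:ℝ) + 1 := by ring
        have e4 : ((N:ℝ) + 1) + 1 = (N:ℝ) + 2 := by ring
        rw [e2] at hd
        rw [e4, e3, e2]
        linarith
      linarith
  have hv_nonneg : 0 ≤ v (K + 1) := by
    simp only [hv_def]
    push_cast
    have he : ((K:ℝ) + 1) - 1 = (K:ℝ) := by ring
    rw [he]
    have := Real.rpow_le_rpow (by positivity : (0:ℝ) ≤ (K:ℝ))
      (by linarith : (K:ℝ) ≤ (K:ℝ) + 1) hγ0.le
    linarith
  calc ‖∑ k ∈ Finset.Icc 1 K, z k * Complex.ofReal (-(t k))‖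
      ≤ ∑ k ∈ Finset.Icc 1 K, ‖z k * Complex.ofReal (-(t k))‖ := norm_sum_le _ _
    _ ≤ ∑ k ∈ Finset.Icc 1 K, t k := by
        refine Finset.sum_le_sum ?_
        intro k hk
        have hk1 : 1 ≤ k := (Finset.mem_Icc.1 hk).1
        have ht0 := ht_nonneg k hk1
        rw [norm_mul, Complex.norm_real, Real.norm_eq_abs, abs_neg, abs_of_nonneg ht0]
        calc ‖z k‖ * t k ≤ 1 * t k := mul_le_mul_of_nonneg_right (hz k) ht0
          _ = t k := one_mul _
    _ ≤ 1 := by have := hsum K; linarith
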